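/- Let K be a finite set of size k ≥ 2, and let N and S be the k-RR noise channel and uniform shuffle channel on K^n respectively (as stochastic matrices indexed by datasets in K^n). Then for every dataset x ∈ K^n and every histogram z on K: Σ_{y : h(y)=z} (N·S)(x,y) = Σ_{y : h(y)=z} (S·N)(x,y). In other words, noise-then-shuffle and shuffle-then-noise induce the same channel from datasets to histograms. -/

import Mathlib

/-- Histogram of a dataset: the count of each value of K in x. -/
def hist (n k : ℕ) (x : Fin n → Fin k) : Fin k → ℕ :=
  fun v => (Finset.univ.filter fun i => x i = v).card

/-- Number of datasets sharing the histogram of x. -/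
def histCount (n k : ℕ) (x : Fin n → Fin k) : ℕ :=
  (Finset.univ.filter fun y : Fin n → Fin k => hist n k y = hist n k x).card

/-- The k-RR noise channel N(x,y) = Π_i q(y_i|x_i), with q(y|x) = p if y = x
and (1−p)/(k−1) otherwise. -/
noncomputable def Nchan (n k : ℕ) (p : ℝ) (x y : Fin n → Fin k) : ℝ :=
  ∏ i, if y i = x i then p else (1 - p) / (k - 1)

/-- The uniform shuffle channel: S(x,y) = 1/#h(x) if h(y) = h(x), else 0. -/
noncomputable def Schan (n k : ℕ) (x y : Fin n → Fin k) : ℝ :=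
  if hist n k y = hist n k x then 1 / (histCount n k x : ℝ) else 0

lemma hist_comp (n k : ℕ) (y : Fin n → Fin k) (σ : Equiv.Perm (Fin n)) :
    hist n k (y ∘ σ) = hist n k y := by
  funext v
  unfold hist
  apply Finset.card_bij (fun i _ => σ i)
  · intro a ha
    simp only [Finset.mem_filter, Finset.mem_univ, true_and, Function.comp] at ha ⊢
    exact ha
  · intro a _ b _ h
    exact σ.injective h
  · intro b hb
    simp only [Finset.mem_filter, Finset.mem_univ, true_and, Function.comp] at hb ⊢
    exact ⟨σ.symm b, by simpa using hb, by simp⟩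

lemma exists_perm (n k : ℕ) (w x : Fin n → Fin k) (h : hist n k w = hist n k x) :
    ∃ σ : Equiv.Perm (Fin n), x ∘ σ = w := by
  classical
  have hcard : ∀ v, Fintype.card {i // w i = v} = Fintype.card {i // x i = v} := by
    intro v
    simp only [Fintype.card_subtype]
    exact congrFun h v
  let e : ∀ v : Fin k, {i // w i = v} ≃ {i // x i = v} :=
    fun v => Fintype.equivOfCardEq (hcard v)
  refine ⟨(Equiv.sigmaFiberEquiv w).symm.trans
    ((Equiv.sigmaCongrRight e).trans (Equiv.sigmaFiberEquiv x)), ?_⟩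
  funext i
  simp only [Function.comp, Equiv.trans_apply, Equiv.sigmaFiberEquiv,
    Equiv.sigmaCongrRight, Equiv.coe_fn_mk, Equiv.coe_fn_symm_mk]
  exact (e (w i) ⟨i, rfl⟩).2

lemma nchan_comp (n k : ℕ) (p : ℝ) (x y : Fin n → Fin k) (σ : Equiv.Perm (Fin n)) :
    Nchan n k p (x ∘ σ) y = Nchan n k p x (y ∘ σ.symm) := by
  unfold Nchan
  rw [← Equiv.prod_comp σ
    (fun j => if (y ∘ σ.symm) j = x j then p else (1 - p) / (↑k - 1))]
  simp [Function.comp]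

/-- noise-then-shuffle and shuffle-then-noise induce the same
channel from datasets to histograms. -/
theorem stmt9 (n k : ℕ) (hn : 1 ≤ n) (hk : 2 ≤ k) (p : ℝ) (hp0 : 0 ≤ p) (hp1 : p ≤ 1)
    (x : Fin n → Fin k) (z : Fin k → ℕ) (hz : ∑ v, z v = n) :
    ∑ y ∈ Finset.univ.filter (fun y : Fin n → Fin k => hist n k y = z),
        (∑ w : Fin n → Fin k, Nchan n k p x w * Schan n k w y)
      = ∑ y ∈ Finset.univ.filter (fun y : Fin n → Fin k => hist n k y = z),
        (∑ w : Fin n → Fin k, Schan n k x w * Nchan n k p w y) := by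
  classical
  set A := Finset.univ.filter (fun y : Fin n → Fin k => hist n k y = z) with hA
  -- the shuffle channel summed over a histogram class
  have key1 : ∀ w : Fin n → Fin k,
      ∑ y ∈ A, Schan n k w y = if hist n k w = z then 1 else 0 := by
    intro w
    by_cases hw : hist n k w = z
    · rw [if_pos hw]
      have hc : ∀ y ∈ A, Schan n k w y = 1 / (histCount n k w : ℝ) := by
        intro y hy
        simp only [hA, Finset.mem_filter] at hy
        unfold Schan
        rw [if_pos (hy.2.trans hw.symm)]
      rw [Finset.sum_congr rfl hc, Finset.sum_const, nsmul_eq_mul]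
      have hAeq : A = Finset.univ.filter
          (fun y : Fin n → Fin k => hist n k y = hist n k w) := by
        simp only [hA, hw]
      have hcard : (A.card : ℝ) = (histCount n k w : ℝ) := by
        rw [hAeq]; rfl
      have hpos : histCount n k w ≠ 0 := by
        unfold histCount
        apply Finset.card_ne_zero_of_mem (a := w)
        simp
      rw [hcard]
      field_simp
    · rw [if_neg hw]
      apply Finset.sum_eq_zero
      intro y hy
      simp only [hA, Finset.mem_filter] at hy
      unfold Schan
      rw [if_neg (by rw [hy.2]; exact fun hh => hw hh.symm)]
  -- invariance of the noise channel marginal under histogram equivalence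
  have F_inv : ∀ w : Fin n → Fin k, hist n k w = hist n k x →
      (∑ y ∈ A, Nchan n k p w y) = ∑ y ∈ A, Nchan n k p x y := by
    intro w hw
    obtain ⟨σ, hσ⟩ := exists_perm n k w x hw
    rw [← hσ]
    calc ∑ y ∈ A, Nchan n k p (x ∘ σ) y
        = ∑ y ∈ A, Nchan n k p x (y ∘ σ.symm) := by
          exact Finset.sum_congr rfl fun y _ => nchan_comp n k p x y σ
      _ = ∑ y ∈ A, Nchan n k p x y := by
          apply Finset.sum_nbij' (fun y => y ∘ σ.symm) (fun y => y ∘ σ)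
          · intro a ha
            simp only [hA, Finset.mem_filter, Finset.mem_univ, true_and] at ha ⊢
            rw [show (⇑σ.symm : Fin n → Fin n) = ⇑(σ.symm) from rfl,
              hist_comp n k a σ.symm]
            exact ha
          · intro a ha
            simp only [hA, Finset.mem_filter, Finset.mem_univ, true_and] at ha ⊢
            rw [hist_comp n k a σ]
            exact ha
          · intro a _
            funext i; simp
          · intro a _
            funext i; simp
          · intro a _
            rfl
  -- LHS computation
  have hL : ∑ y ∈ A, (∑ w : Fin n → Fin k, Nchan n k p x w * Schan n k w y)
      = ∑ y ∈ A, Nchan n k p x y := by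
    rw [Finset.sum_comm]
    have h1 : ∀ w : Fin n → Fin k,
        ∑ y ∈ A, Nchan n k p x w * Schan n k w y
          = Nchan n k p x w * (if hist n k w = z then 1 else 0) := by
      intro w
      rw [← Finset.mul_sum, key1 w]
    rw [Finset.sum_congr rfl fun w _ => h1 w]
    simp only [mul_ite, mul_one, mul_zero]
    rw [← Finset.sum_filter]
  -- RHS computation
  have hR : ∑ y ∈ A, (∑ w : Fin n → Fin k, Schan n k x w * Nchan n k p w y)
      = ∑ y ∈ A, Nchan n k p x y := by
    rw [Finset.sum_comm]
    have h1 : ∀ w : Fin n → Fin k,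
        ∑ y ∈ A, Schan n k x w * Nchan n k p w y
          = Schan n k x w * ∑ y ∈ A, Nchan n k p w y := by
      intro w
      rw [Finset.mul_sum]
    rw [Finset.sum_congr rfl fun w _ => h1 w]
    have h2 : ∀ w : Fin n → Fin k,
        Schan n k x w * (∑ y ∈ A, Nchan n k p w y)
          = (if hist n k w = hist n k x then (1 / (histCount n k x : ℝ)) else 0)
              * ∑ y ∈ A, Nchan n k p x y := by
      intro w
      unfold Schan
      by_cases hw : hist n k w = hist n k x
      · rw [if_pos hw, F_inv w hw]
      · rw [if_neg hw, zero_mul, zero_mul]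
    rw [Finset.sum_congr rfl fun w _ => h2 w]
    rw [← Finset.sum_mul, ← Finset.sum_filter, Finset.sum_const, nsmul_eq_mul]
    have hpos : histCount n k x ≠ 0 := by
      unfold histCount
      apply Finset.card_ne_zero_of_mem (a := x)
      simp
    have hcc : ((Finset.univ.filter
        (fun w : Fin n → Fin k => hist n k w = hist n k x)).card : ℝ)
        = (histCount n k x : ℝ) := rfl
    rw [hcc]
    have hne : (histCount n k x : ℝ) ≠ 0 := Nat.cast_ne_zero.mpr hpos
    field_simp
  rw [hL, hR]
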